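/- Satisfiability checking of programs reduces to satisfiability checking of predicates: a program P is satisfiable (i.e., has an open answer set) if and only if the fresh n-ary predicate p is satisfiable with respect to the program P ∪ { p(X⃗) ∨ not p(X⃗) ← }, where p is a predicate symbol not occurring in P and X⃗ is a tuple of n distinct variables. -/

import Mathlib

/-! Core formalization of (open) answer set programming, following
Heymans et al., "Guarded Hybrid Knowledge Bases". -/

namespace GH

/-- Terms over constants `C` and variables `V`. -/
inductive Term (C V : Type) : Type
  | const : C → Term C V
  | var : V → Term C V

/-- Atoms over predicate symbols `P`: regular atoms `p(t⃗)` and equality atoms `t = s`. -/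
inductive Atom (P C V : Type) : Type
  | app : P → List (Term C V) → Atom P C V
  | eq : Term C V → Term C V → Atom P C V

/-- Literals: atoms `a` or naf-literals `not a`. -/
inductive Lit (P C V : Type) : Type
  | pos : Atom P C V → Lit P C V
  | naf : Atom P C V → Lit P C V

/-- A rule `α ← β`: head `α` and body `β` are finite sets of literals (represented as lists). -/
structure Rule (P C V : Type) : Type where
  head : List (Lit P C V)
  body : List (Lit P C V)

variable {P C V D : Type}

/-- A regular atom is an equality-free atom. -/
def Atom.isRegular : Atom P C V → Prop
  | .app _ _ => True
  | .eq _ _ => False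

/-- The positive atoms of a list of literals. -/
def posAtoms (l : List (Lit P C V)) : List (Atom P C V) :=
  l.filterMap (fun lit => match lit with | .pos a => some a | .naf _ => none)

/-- Well-formedness of rules: at most one positive atom in the head,
and every positive head atom is regular. -/
def Rule.wf (r : Rule P C V) : Prop :=
  (posAtoms r.head).length ≤ 1 ∧ ∀ a ∈ posAtoms r.head, a.isRegular

/-- A program is a (countable) set of well-formed rules; we record well-formedness
as a predicate on sets of rules. -/
def IsProgram (Pr : Set (Rule P C V)) : Prop := ∀ r ∈ Pr, r.wf

/-- The free rule `p(t⃗) ∨ not p(t⃗) ← `. -/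
def freeRule (p : P) (ts : List (Term C V)) : Rule P C V :=
  ⟨[Lit.pos (Atom.app p ts), Lit.naf (Atom.app p ts)], []⟩

/-- Occurrence of a predicate symbol in an atom. -/
def Atom.hasPred (p : P) : Atom P C V → Prop
  | .app q _ => q = p
  | .eq _ _ => False

def Lit.hasPred (p : P) : Lit P C V → Prop
  | .pos a => a.hasPred p
  | .naf a => a.hasPred p

def Rule.hasPred (r : Rule P C V) (p : P) : Prop :=
  ∃ l ∈ r.head ++ r.body, l.hasPred p

/-! ### Variables, free rules and guardedness -/

def Term.varsL : Term C V → List V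
  | .const _ => []
  | .var v => [v]

def Atom.varsL : Atom P C V → List V
  | .app _ ts => (ts.map Term.varsL).foldr (· ++ ·) []
  | .eq t s => t.varsL ++ s.varsL

def Lit.varsL : Lit P C V → List V
  | .pos a => a.varsL
  | .naf a => a.varsL

def Rule.varsL (r : Rule P C V) : List V :=
  ((r.head ++ r.body).map Lit.varsL).foldr (· ++ ·) []

/-- A free rule is a rule of the form `q(X⃗) ∨ not q(X⃗) ← ` for a tuple `X⃗` of
pairwise distinct variables. -/
def Rule.isFree (r : Rule P C V) : Prop :=
  ∃ (p : P) (xs : List V), xs.Nodup ∧ r = freeRule p (xs.map Term.var)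

/-- A rule is guarded if some positive body atom (the guard) contains all
variables of the rule. -/
def Rule.isGuarded (r : Rule P C V) : Prop :=
  ∃ a : Atom P C V, Lit.pos a ∈ r.body ∧ ∀ v ∈ r.varsL, v ∈ a.varsL

/-- A guarded program: a program each of whose non-free rules is guarded. -/
def GuardedProgram (Pr : Set (Rule P C V)) : Prop :=
  IsProgram Pr ∧ ∀ r ∈ Pr, r.isFree ∨ r.isGuarded

/-! ### Ground programs, answer sets -/

/-- Ground atoms over the domain `D`. -/
inductive GAtom (P D : Type) : Type
  | app : P → List D → GAtom P D
  | eq : D → D → GAtom P D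

inductive GLit (P D : Type) : Type
  | pos : GAtom P D → GLit P D
  | naf : GAtom P D → GLit P D

structure GRule (P D : Type) : Type where
  head : List (GLit P D)
  body : List (GLit P D)

def Term.ground (σ : C → D) (ν : V → D) : Term C V → D
  | .const c => σ c
  | .var v => ν v

def Atom.ground (σ : C → D) (ν : V → D) : Atom P C V → GAtom P D
  | .app p ts => .app p (ts.map (Term.ground σ ν))
  | .eq t s => .eq (t.ground σ ν) (s.ground σ ν)

def Lit.ground (σ : C → D) (ν : V → D) : Lit P C V → GLit P D
  | .pos a => .pos (a.ground σ ν)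
  | .naf a => .naf (a.ground σ ν)

def Rule.ground (r : Rule P C V) (σ : C → D) (ν : V → D) : GRule P D :=
  ⟨r.head.map (Lit.ground σ ν), r.body.map (Lit.ground σ ν)⟩

/-- The grounding `P_U` of a program w.r.t. a pre-interpretation `U = (D, σ)`:
all ground instances of rules of the program over `D`, with constants
interpreted via `σ`. -/
def groundProg (Pr : Set (Rule P C V)) (σ : C → D) : Set (GRule P D) :=
  { gr | ∃ r ∈ Pr, ∃ ν : V → D, gr = r.ground σ ν }

/-- Truth of a ground atom w.r.t. an interpretation (a set of regular ground atoms):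
`p(d⃗)` holds iff it belongs to the interpretation; `d = e` holds iff `d` and `e` are equal. -/
def GAtom.holds (M : Set (GAtom P D)) : GAtom P D → Prop
  | .app p ds => GAtom.app p ds ∈ M
  | .eq d e => d = e

def GLit.holds (M : Set (GAtom P D)) : GLit P D → Prop
  | .pos a => a.holds M
  | .naf a => ¬ a.holds M

/-- Satisfaction of a ground rule. -/
def GRule.satisfied (M : Set (GAtom P D)) (r : GRule P D) : Prop :=
  (∀ l ∈ r.body, l.holds M) → ∃ l ∈ r.head, l.holds M

/-- `M` is a model of the ground program `Q`. -/
def GModel (Q : Set (GRule P D)) (M : Set (GAtom P D)) : Prop :=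
  ∀ r ∈ Q, r.satisfied M

def GLit.isPosB : GLit P D → Bool
  | .pos _ => true
  | .naf _ => false

/-- The positive part `α⁺ ← β⁺` of a ground rule. -/
def GRule.posPart (r : GRule P D) : GRule P D :=
  ⟨r.head.filter GLit.isPosB, r.body.filter GLit.isPosB⟩

/-- The GL-reduct keeps a rule `α ← β` iff `M ⊨ not β⁻` and `M ⊨ α⁻`. -/
def GRule.reductKeep (M : Set (GAtom P D)) (r : GRule P D) : Prop :=
  (∀ a : GAtom P D, GLit.naf a ∈ r.body → ¬ a.holds M) ∧
  (∀ a : GAtom P D, GLit.naf a ∈ r.head → a.holds M)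

/-- The GL-style reduct `Q^M` of a ground program. -/
def progReduct (Q : Set (GRule P D)) (M : Set (GAtom P D)) : Set (GRule P D) :=
  { r' | ∃ r ∈ Q, r.reductKeep M ∧ r' = r.posPart }

/-- `M` is an answer set of the ground program `Q`: `M` is a subset-minimal
model of the reduct `Q^M`. -/
def AnswerSet (Q : Set (GRule P D)) (M : Set (GAtom P D)) : Prop :=
  GModel (progReduct Q M) M ∧
    ∀ M' ⊆ M, GModel (progReduct Q M) M' → M' = M

/-- A program is satisfiable iff it has an open answer set `(U, M)`. -/
def ProgSatisfiable (Pr : Set (Rule P C V)) : Prop :=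
  ∃ (D : Type) (_ : Nonempty D) (σ : C → D) (M : Set (GAtom P D)),
    AnswerSet (groundProg Pr σ) M

/-- An `n`-ary predicate `p` is satisfiable w.r.t. `Pr` iff some open answer set
`((D, σ), M)` contains `p(x⃗)` for some `x⃗ ∈ Dⁿ`. -/
def PredSatN (Pr : Set (Rule P C V)) (p : P) (n : ℕ) : Prop :=
  ∃ (D : Type) (_ : Nonempty D) (σ : C → D) (M : Set (GAtom P D)),
    AnswerSet (groundProg Pr σ) M ∧
      ∃ ds : List D, ds.length = n ∧ GAtom.app p ds ∈ M

/-- Satisfiability of a predicate (arity left implicit). -/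
def PredSat (Pr : Set (Rule P C V)) (p : P) : Prop :=
  ∃ (D : Type) (_ : Nonempty D) (σ : C → D) (M : Set (GAtom P D)),
    AnswerSet (groundProg Pr σ) M ∧ ∃ ds : List D, GAtom.app p ds ∈ M

end GH

namespace GH

variable {P C V D : Type}

/-- The underlying atom of a ground literal. -/
def GLit.atom : GLit P D → GAtom P D
  | .pos a => a
  | .naf a => a

/-- A ground atom not built from the predicate `p`. -/
def GAtom.noP (p : P) : GAtom P D → Prop
  | .app q _ => q ≠ p
  | .eq _ _ => True

/-- All atoms of a ground rule avoid `p`. -/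
def NoPRule (p : P) (gr : GRule P D) : Prop :=
  ∀ l ∈ gr.head ++ gr.body, l.atom.noP p

/-- Two interpretations agree on atoms avoiding `p`. -/
def AgreeOff (p : P) (M M' : Set (GAtom P D)) : Prop :=
  ∀ a : GAtom P D, a.noP p → (a ∈ M ↔ a ∈ M')

lemma AgreeOff.symm {p : P} {M M' : Set (GAtom P D)} (h : AgreeOff p M M') :
    AgreeOff p M' M := fun a ha => (h a ha).symm

lemma holds_congr {p : P} {M M' : Set (GAtom P D)} (h : AgreeOff p M M')
    {a : GAtom P D} (ha : a.noP p) : a.holds M ↔ a.holds M' := by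
  cases a with
  | app q ds => exact h _ ha
  | eq d e => exact Iff.rfl

lemma lholds_congr {p : P} {M M' : Set (GAtom P D)} (h : AgreeOff p M M') {l : GLit P D}
    (hl : l.atom.noP p) : l.holds M ↔ l.holds M' := by
  cases l with
  | pos a => exact holds_congr h hl
  | naf a => exact not_congr (holds_congr h hl)

lemma satisfied_congr {p : P} {M M' : Set (GAtom P D)} (h : AgreeOff p M M')
    {gr : GRule P D} (hg : NoPRule p gr) : gr.satisfied M ↔ gr.satisfied M' := by
  have key : ∀ l ∈ gr.head ++ gr.body, (l.holds M ↔ l.holds M') :=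
    fun l hl => lholds_congr h (hg l hl)
  unfold GRule.satisfied
  constructor <;> intro hs hb
  · obtain ⟨l, hl, hh⟩ := hs fun l hl => (key l (List.mem_append_right _ hl)).mpr (hb l hl)
    exact ⟨l, hl, (key l (List.mem_append_left _ hl)).mp hh⟩
  · obtain ⟨l, hl, hh⟩ := hs fun l hl => (key l (List.mem_append_right _ hl)).mp (hb l hl)
    exact ⟨l, hl, (key l (List.mem_append_left _ hl)).mpr hh⟩

lemma reductKeep_congr {p : P} {M M' : Set (GAtom P D)} (h : AgreeOff p M M')
    {gr : GRule P D} (hg : NoPRule p gr) : gr.reductKeep M ↔ gr.reductKeep M' := by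
  have hb : ∀ a : GAtom P D, GLit.naf a ∈ gr.body → (a.holds M ↔ a.holds M') :=
    fun a ha => holds_congr h (hg _ (List.mem_append_right _ ha))
  have hh : ∀ a : GAtom P D, GLit.naf a ∈ gr.head → (a.holds M ↔ a.holds M') :=
    fun a ha => holds_congr h (hg _ (List.mem_append_left _ ha))
  unfold GRule.reductKeep
  constructor <;> rintro ⟨h1, h2⟩
  · exact ⟨fun a ha => (not_congr (hb a ha)).mp (h1 a ha),
      fun a ha => (hh a ha).mp (h2 a ha)⟩
  · exact ⟨fun a ha => (not_congr (hb a ha)).mpr (h1 a ha),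
      fun a ha => (hh a ha).mpr (h2 a ha)⟩

lemma NoPRule.posPart {p : P} {gr : GRule P D} (hg : NoPRule p gr) :
    NoPRule p gr.posPart := by
  intro l hl
  apply hg
  rcases List.mem_append.mp hl with h | h
  · exact List.mem_append_left _ (List.mem_of_mem_filter h)
  · exact List.mem_append_right _ (List.mem_of_mem_filter h)

lemma noP_ground {p : P} {r : Rule P C V} (hr : ¬ r.hasPred p) (σ : C → D) (ν : V → D) :
    NoPRule p (r.ground σ ν) := by
  intro l hl
  have : ∃ l₀ ∈ r.head ++ r.body, l = l₀.ground σ ν := by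
    rcases List.mem_append.mp hl with h | h
    · obtain ⟨l₀, h₀, rfl⟩ := List.mem_map.mp h
      exact ⟨l₀, List.mem_append_left _ h₀, rfl⟩
    · obtain ⟨l₀, h₀, rfl⟩ := List.mem_map.mp h
      exact ⟨l₀, List.mem_append_right _ h₀, rfl⟩
  obtain ⟨l₀, h₀, rfl⟩ := this
  cases l₀ with
  | pos a =>
    cases a with
    | app q ts => exact fun hq => hr ⟨_, h₀, hq⟩
    | eq t s => trivial
  | naf a =>
    cases a with
    | app q ts => exact fun hq => hr ⟨_, h₀, hq⟩
    | eq t s => trivial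

lemma groundProg_union (A B : Set (Rule P C V)) (σ : C → D) :
    groundProg (A ∪ B) σ = groundProg A σ ∪ groundProg B σ := by
  ext gr
  simp only [groundProg, Set.mem_setOf_eq, Set.mem_union]
  constructor
  · rintro ⟨r, (hr | hr), ν, rfl⟩
    · exact Or.inl ⟨r, hr, ν, rfl⟩
    · exact Or.inr ⟨r, hr, ν, rfl⟩
  · rintro (⟨r, hr, ν, rfl⟩ | ⟨r, hr, ν, rfl⟩)
    · exact ⟨r, Or.inl hr, ν, rfl⟩
    · exact ⟨r, Or.inr hr, ν, rfl⟩

lemma progReduct_union (Q Q' : Set (GRule P D)) (M : Set (GAtom P D)) :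
    progReduct (Q ∪ Q') M = progReduct Q M ∪ progReduct Q' M := by
  ext r'
  simp only [progReduct, Set.mem_setOf_eq, Set.mem_union]
  constructor
  · rintro ⟨gr, (hg | hg), hk, rfl⟩
    · exact Or.inl ⟨gr, hg, hk, rfl⟩
    · exact Or.inr ⟨gr, hg, hk, rfl⟩
  · rintro (⟨gr, hg, hk, rfl⟩ | ⟨gr, hg, hk, rfl⟩)
    · exact ⟨gr, Or.inl hg, hk, rfl⟩
    · exact ⟨gr, Or.inr hg, hk, rfl⟩

lemma reduct_congr {p : P} {M M' : Set (GAtom P D)} (h : AgreeOff p M M')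
    {Pr : Set (Rule P C V)} (hf : ∀ r ∈ Pr, ¬ r.hasPred p) (σ : C → D) :
    progReduct (groundProg Pr σ) M = progReduct (groundProg Pr σ) M' := by
  ext r'
  simp only [progReduct, Set.mem_setOf_eq]
  constructor
  · rintro ⟨gr, ⟨r, hr, ν, rfl⟩, hk, rfl⟩
    exact ⟨_, ⟨r, hr, ν, rfl⟩, (reductKeep_congr h (noP_ground (hf r hr) σ ν)).mp hk, rfl⟩
  · rintro ⟨gr, ⟨r, hr, ν, rfl⟩, hk, rfl⟩
    exact ⟨_, ⟨r, hr, ν, rfl⟩, (reductKeep_congr h (noP_ground (hf r hr) σ ν)).mpr hk, rfl⟩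

lemma reduct_noP {p : P} {Pr : Set (Rule P C V)} (hf : ∀ r ∈ Pr, ¬ r.hasPred p)
    {σ : C → D} {M : Set (GAtom P D)} {r' : GRule P D}
    (h : r' ∈ progReduct (groundProg Pr σ) M) : NoPRule p r' := by
  obtain ⟨gr, ⟨r, hr, ν, rfl⟩, _, rfl⟩ := h
  exact (noP_ground (hf r hr) σ ν).posPart

lemma freeGround (p : P) (ts : List (Term C V)) (σ : C → D) (ν : V → D) :
    (freeRule p ts).ground σ ν =
      ⟨[GLit.pos (GAtom.app p (ts.map (Term.ground σ ν))),
        GLit.naf (GAtom.app p (ts.map (Term.ground σ ν)))], []⟩ := rfl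

lemma free_posPart (A : GAtom P D) :
    (GRule.posPart ⟨[GLit.pos A, GLit.naf A], []⟩ : GRule P D) = ⟨[GLit.pos A], []⟩ := by
  simp [GRule.posPart, GLit.isPosB, List.filter]

lemma free_reductKeep {A : GAtom P D} {M : Set (GAtom P D)} :
    GRule.reductKeep M ⟨[GLit.pos A, GLit.naf A], []⟩ ↔ A.holds M := by
  constructor
  · rintro ⟨_, h2⟩
    exact h2 A (by simp)
  · intro h
    refine ⟨by simp, ?_⟩
    intro a ha
    simp only [List.mem_cons, List.not_mem_nil, or_false] at ha
    rcases ha with ha | ha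
    · cases ha
    · cases GLit.naf.inj ha; exact h

lemma free_reduct_elim {p : P} {ts : List (Term C V)} {σ : C → D} {M : Set (GAtom P D)}
    {r' : GRule P D}
    (h : r' ∈ progReduct (groundProg ({freeRule p ts} : Set (Rule P C V)) σ) M) :
    ∃ ν : V → D, GAtom.app p (ts.map (Term.ground σ ν)) ∈ M ∧
      r' = ⟨[GLit.pos (GAtom.app p (ts.map (Term.ground σ ν)))], []⟩ := by
  obtain ⟨gr, ⟨r, hr, ν, rfl⟩, hk, rfl⟩ := h
  rw [Set.mem_singleton_iff] at hr
  subst hr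
  rw [freeGround] at hk ⊢
  exact ⟨ν, free_reductKeep.mp hk, free_posPart _⟩

lemma free_reduct_intro {p : P} {ts : List (Term C V)} {σ : C → D} {M : Set (GAtom P D)}
    (ν : V → D) (h : GAtom.app p (ts.map (Term.ground σ ν)) ∈ M) :
    (⟨[GLit.pos (GAtom.app p (ts.map (Term.ground σ ν)))], []⟩ : GRule P D) ∈
      progReduct (groundProg ({freeRule p ts} : Set (Rule P C V)) σ) M := by
  refine ⟨(freeRule p ts).ground σ ν, ⟨freeRule p ts, rfl, ν, rfl⟩, ?_, ?_⟩
  · rw [freeGround]; exact free_reductKeep.mpr h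
  · rw [freeGround, free_posPart]

/-- Satisfiability checking of programs reduces to satisfiability
checking of predicates: a program `Pr` is satisfiable (has an open answer set)
iff the fresh `n`-ary predicate `p` is satisfiable w.r.t.
`Pr ∪ { p(X⃗) ∨ not p(X⃗) ← }`, where `p` does not occur in `Pr` and `X⃗` is a
tuple of `n` distinct variables. -/
theorem progSat_iff_freshPredSat
    (P C V : Type) (Pr : Set (Rule P C V)) (hPr : IsProgram Pr)
    (p : P) (hfresh : ∀ r ∈ Pr, ¬ r.hasPred p)
    (n : ℕ) (X : Fin n → V) (hX : Function.Injective X) :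
    ProgSatisfiable Pr ↔
      PredSatN (Pr ∪ {freeRule p ((List.ofFn X).map Term.var)}) p n := by
  set ts : List (Term C V) := (List.ofFn X).map Term.var with hts
  constructor
  · rintro ⟨D, ⟨d⟩, σ, M, hM⟩
    -- M contains no p-atoms
    have hMnoP : ∀ ds : List D, GAtom.app p ds ∉ M := by
      intro ds hds
      have hsub : {a ∈ M | a.noP p} ⊆ M := Set.sep_subset _ _
      have hag : AgreeOff p {a ∈ M | a.noP p} M :=
        fun a ha => ⟨fun h => h.1, fun h => ⟨h, ha⟩⟩
      have hmod : GModel (progReduct (groundProg Pr σ) M) {a ∈ M | a.noP p} :=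
        fun r' hr' => (satisfied_congr hag (reduct_noP hfresh hr')).mpr (hM.1 r' hr')
      have hNM := hM.2 _ hsub hmod
      rw [← hNM] at hds
      exact hds.2 rfl
    set ds₀ : List D := List.replicate n d with hds₀
    set A₀ : GAtom P D := GAtom.app p ds₀ with hA₀
    set M' : Set (GAtom P D) := M ∪ {A₀} with hM'
    have hagMM' : AgreeOff p M M' := by
      intro a ha
      constructor
      · exact fun h => Or.inl h
      · rintro (h | h)
        · exact h
        · rw [Set.mem_singleton_iff] at h; subst h; exact absurd rfl ha
    have hsplit : progReduct (groundProg (Pr ∪ {freeRule p ts}) σ) M' =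
        progReduct (groundProg Pr σ) M ∪
          progReduct (groundProg ({freeRule p ts} : Set (Rule P C V)) σ) M' := by
      rw [groundProg_union, progReduct_union, ← reduct_congr hagMM' hfresh]
    have hM'model : GModel (progReduct (groundProg (Pr ∪ {freeRule p ts}) σ) M') M' := by
      rw [hsplit]
      rintro r' (hr' | hr')
      · exact (satisfied_congr hagMM' (reduct_noP hfresh hr')).mp (hM.1 r' hr')
      · obtain ⟨ν, hmem, rfl⟩ := free_reduct_elim hr'
        intro _
        exact ⟨_, List.mem_singleton_self _, hmem⟩
    have hcomp : ts.map (Term.ground σ fun _ => d) = ds₀ := by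
      simp [hts, hds₀, List.map_map, Function.comp_def, Term.ground, List.map_const']
    have hfact : (⟨[GLit.pos A₀], []⟩ : GRule P D) ∈
        progReduct (groundProg (Pr ∪ {freeRule p ts}) σ) M' := by
      rw [hsplit]
      right
      have h0 : GAtom.app p (ts.map (Term.ground σ fun _ => d)) ∈ M' := by
        rw [hcomp]; exact Or.inr rfl
      have := free_reduct_intro (fun _ => d) h0
      rwa [hcomp] at this
    have hAS' : AnswerSet (groundProg (Pr ∪ {freeRule p ts}) σ) M' := by
      refine ⟨hM'model, ?_⟩
      intro M'' hsub hmod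
      have hp0 : A₀ ∈ M'' := by
        obtain ⟨l, hl, hh⟩ := hmod _ hfact (by intro l hl; simp at hl)
        rw [List.mem_singleton] at hl
        subst hl
        exact hh
      set N : Set (GAtom P D) := {a ∈ M'' | a.noP p} with hN
      have hagN : AgreeOff p N M'' := fun a ha => ⟨fun h => h.1, fun h => ⟨h, ha⟩⟩
      have hNsubM : N ⊆ M := by
        rintro a ⟨haM'', hnoP⟩
        rcases hsub haM'' with h | h
        · exact h
        · rw [Set.mem_singleton_iff] at h; subst h; exact absurd rfl hnoP
      have hNmod : GModel (progReduct (groundProg Pr σ) M) N := by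
        intro r' hr'
        have h1 : r'.satisfied M'' := hmod r' (by rw [hsplit]; exact Or.inl hr')
        exact (satisfied_congr hagN (reduct_noP hfresh hr')).mpr h1
      have hNM : N = M := hM.2 N hNsubM hNmod
      refine Set.Subset.antisymm hsub ?_
      rintro a (haM | haA)
      · rw [← hNM] at haM
        exact haM.1
      · rw [Set.mem_singleton_iff] at haA; subst haA; exact hp0
    exact ⟨D, ⟨d⟩, σ, M', hAS', ds₀, List.length_replicate, Or.inr rfl⟩
  · rintro ⟨D, ⟨d⟩, σ, M, hAS, ds, hlen, hds⟩
    set N : Set (GAtom P D) := {a ∈ M | a.noP p} with hN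
    have hagN : AgreeOff p N M := fun a ha => ⟨fun h => h.1, fun h => ⟨h, ha⟩⟩
    have hNsub : N ⊆ M := Set.sep_subset _ _
    have hredNM : progReduct (groundProg Pr σ) N = progReduct (groundProg Pr σ) M :=
      reduct_congr hagN hfresh σ
    refine ⟨D, ⟨d⟩, σ, N, ?_, ?_⟩
    · rw [hredNM]
      intro r' hr'
      have h1 : r'.satisfied M :=
        hAS.1 r' (by rw [groundProg_union, progReduct_union]; exact Or.inl hr')
      exact (satisfied_congr hagN (reduct_noP hfresh hr')).mpr h1
    · intro N' hsub' hmod'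
      rw [hredNM] at hmod'
      set M'' : Set (GAtom P D) := N' ∪ {a ∈ M | ¬ a.noP p} with hM''
      have hagN' : AgreeOff p N' M'' := by
        intro a ha
        constructor
        · exact fun h => Or.inl h
        · rintro (h | h)
          · exact h
          · exact absurd ha h.2
      have hM''sub : M'' ⊆ M := by
        rintro a (h | h)
        · exact hNsub (hsub' h)
        · exact h.1
      have hM''mod :
          GModel (progReduct (groundProg (Pr ∪ {freeRule p ts}) σ) M) M'' := by
        rw [groundProg_union, progReduct_union]
        rintro r' (hr' | hr')
        · exact (satisfied_congr hagN' (reduct_noP hfresh hr')).mp (hmod' r' hr')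
        · obtain ⟨ν, hmem, rfl⟩ := free_reduct_elim hr'
          intro _
          refine ⟨_, List.mem_singleton_self _, ?_⟩
          exact Or.inr ⟨hmem, fun h => h rfl⟩
      have hM''M : M'' = M := hAS.2 M'' hM''sub hM''mod
      refine Set.Subset.antisymm hsub' ?_
      intro a haN
      have haM'' : a ∈ M'' := by rw [hM''M]; exact hNsub haN
      rcases haM'' with h | h
      · exact h
      · exact absurd haN.2 h.2

end GH
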